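/- Let d ≥ 1, let f : EuclideanSpace ℝ (Fin d) → ℝ be differentiable, let L > 0 and suppose the gradient ∇f is Lipschitz with constant L. Let η > 0 and let (x_k)_{k ∈ ℕ} satisfy x_{k+1} = x_k - η • ∇f(x_k) for all k. Then for every natural number s ≥ 1, ‖Σ_{k=0}^{s-1} (∇f(x_k) - ∇f(x_0))‖ ≤ (((1 + ηL)^s - 1 - s·η·L)/(η·L)) · ‖∇f(x_0)‖. -/

import Mathlib

/-- Perturbation of multi-step local gradient descent (Lemma 1 of the paper):
the accumulated gradient drift over `s` local steps is bounded by
`(((1+ηL)^s - 1 - sηL)/(ηL)) ‖∇f(x₀)‖`. -/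
theorem local_steps_gradient_perturbation
    (d : ℕ) (hd : 1 ≤ d)
    (f : EuclideanSpace ℝ (Fin d) → ℝ) (hf : Differentiable ℝ f)
    (L : ℝ) (hL : 0 < L)
    (hlip : ∀ x y, ‖gradient f x - gradient f y‖ ≤ L * ‖x - y‖)
    (η : ℝ) (hη : 0 < η)
    (x : ℕ → EuclideanSpace ℝ (Fin d))
    (hx : ∀ k, x (k + 1) = x k - η • gradient f (x k))
    (s : ℕ) (hs : 1 ≤ s) :
    ‖∑ k ∈ Finset.range s, (gradient f (x k) - gradient f (x 0))‖ ≤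
      (((1 + η * L) ^ s - 1 - (s : ℝ) * η * L) / (η * L)) *
        ‖gradient f (x 0)‖ := by
  set g : ℕ → EuclideanSpace ℝ (Fin d) := fun k => gradient f (x k) with hg
  set a : ℝ := η * L with haa
  have ha : 0 < a := mul_pos hη hL
  have hstep : ∀ k, ‖g (k + 1) - g k‖ ≤ a * ‖g k‖ := by
    intro k
    have := hlip (x (k + 1)) (x k)
    have hxk : x (k + 1) - x k = -(η • g k) := by
      rw [hx k]; abel
    rw [hxk, norm_neg, norm_smul, Real.norm_eq_abs, abs_of_pos hη] at this
    calc ‖g (k + 1) - g k‖ ≤ L * (η * ‖g k‖) := this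
      _ = a * ‖g k‖ := by ring
  have hgrow : ∀ k, ‖g k‖ ≤ (1 + a) ^ k * ‖g 0‖ := by
    intro k
    induction k with
    | zero => simp
    | succ n ih =>
      have h1 : ‖g (n + 1)‖ ≤ ‖g (n + 1) - g n‖ + ‖g n‖ := by
        have := norm_add_le (g (n + 1) - g n) (g n)
        simpa using this
      calc ‖g (n + 1)‖ ≤ ‖g (n + 1) - g n‖ + ‖g n‖ := h1
        _ ≤ a * ‖g n‖ + ‖g n‖ := by linarith [hstep n]
        _ = (1 + a) * ‖g n‖ := by ring
        _ ≤ (1 + a) * ((1 + a) ^ n * ‖g 0‖) := by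
            apply mul_le_mul_of_nonneg_left ih; linarith
        _ = (1 + a) ^ (n + 1) * ‖g 0‖ := by ring
  have hdrift : ∀ k, ‖g k - g 0‖ ≤ ((1 + a) ^ k - 1) * ‖g 0‖ := by
    intro k
    induction k with
    | zero => simp
    | succ n ih =>
      calc ‖g (n + 1) - g 0‖ ≤ ‖g (n + 1) - g n‖ + ‖g n - g 0‖ := by
            have := norm_sub_le_norm_sub_add_norm_sub (g (n + 1)) (g n) (g 0)
            linarith
        _ ≤ a * ‖g n‖ + ((1 + a) ^ n - 1) * ‖g 0‖ := by
            linarith [hstep n]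
        _ ≤ a * ((1 + a) ^ n * ‖g 0‖) + ((1 + a) ^ n - 1) * ‖g 0‖ := by
            nlinarith [hgrow n, ha.le]
        _ = ((1 + a) ^ (n + 1) - 1) * ‖g 0‖ := by ring
  calc ‖∑ k ∈ Finset.range s, (g k - g 0)‖
      ≤ ∑ k ∈ Finset.range s, ‖g k - g 0‖ := norm_sum_le _ _
    _ ≤ ∑ k ∈ Finset.range s, ((1 + a) ^ k - 1) * ‖g 0‖ :=
        Finset.sum_le_sum fun k _ => hdrift k
    _ = ((∑ k ∈ Finset.range s, (1 + a) ^ k) - s) * ‖g 0‖ := by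
        simp only [sub_mul, Finset.sum_sub_distrib, Finset.sum_const,
          Finset.card_range, nsmul_eq_mul, Finset.sum_mul, one_mul]
    _ = (((1 + a) ^ s - 1 - (s : ℝ) * a) / a) * ‖g 0‖ := by
        rw [geom_sum_eq (by linarith : (1 : ℝ) + a ≠ 1)]
        have : (1 + a) - 1 = a := by ring
        rw [this]
        congr 1
        field_simp
    _ = (((1 + η * L) ^ s - 1 - (s : ℝ) * η * L) / (η * L)) * ‖g 0‖ := by
        rw [haa]; ring_nf
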